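/- Let (X_n)_{n∈ℕ} be a sequence of nonzero real or complex Banach spaces. If the ℓ^∞-sum ℓ^∞((X_n)_{n∈ℕ}) (bounded sequences (x_n) with x_n ∈ X_n and norm sup_n ‖x_n‖) is lush, then each X_n is lush. -/

import Mathlib

open scoped BigOperators

/-- The open slice `S(B_X, f, α) = {x ∈ B_X : Re f(x) > 1 - α}` of the closed unit ball. -/
def Slice (𝕜 : Type*) {X : Type*} [RCLike 𝕜] [NormedAddCommGroup X] [NormedSpace 𝕜 X]
    (f : X →L[𝕜] 𝕜) (α : ℝ) : Set X :=
  {x | ‖x‖ ≤ 1 ∧ 1 - α < RCLike.re (f x)}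

/-- The convex hull of `𝕋 · S(B_X, f, α)`, i.e. all convex combinations of rotated points of
the slice `S(B_X, f, α)`. -/
def ConvRotSlice (𝕜 : Type*) {X : Type*} [RCLike 𝕜] [NormedAddCommGroup X] [NormedSpace 𝕜 X]
    (f : X →L[𝕜] 𝕜) (α : ℝ) : Set X :=
  {x | ∃ (n : ℕ) (t : Fin n → ℝ) (ω : Fin n → 𝕜) (s : Fin n → X),
    (∀ k, 0 ≤ t k) ∧ (∑ k, t k) = 1 ∧ (∀ k, ‖ω k‖ = 1) ∧ (∀ k, s k ∈ Slice 𝕜 f α) ∧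
    x = ∑ k, ((t k : 𝕜) * ω k) • s k}

/-- A Banach space `X` over `𝕜 = ℝ` or `ℂ` is *lush* if for all `u, v` in the unit sphere and
every `ε > 0` there is a norm-one functional `f` with `u ∈ S(B_X, f, ε)` and
`dist(v, conv(𝕋 · S(B_X, f, ε))) < ε`. -/
def IsLush (𝕜 X : Type*) [RCLike 𝕜] [NormedAddCommGroup X] [NormedSpace 𝕜 X] : Prop :=
  ∀ u v : X, ‖u‖ = 1 → ‖v‖ = 1 → ∀ ε : ℝ, 0 < ε →
    ∃ f : X →L[𝕜] 𝕜, ‖f‖ = 1 ∧ u ∈ Slice 𝕜 f ε ∧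
      Metric.infDist v (ConvRotSlice 𝕜 f ε) < ε

section Aux

variable {𝕜 : Type*} [RCLike 𝕜] {X : ℕ → Type*}
    [∀ n, NormedAddCommGroup (X n)] [∀ n, NormedSpace 𝕜 (X n)]

lemma lp_single_norm_le (n : ℕ) (a : X n) : ‖(lp.single ⊤ n a : lp X ⊤)‖ ≤ ‖a‖ := by
  refine lp.norm_le_of_forall_le (norm_nonneg a) fun j => ?_
  by_cases hj : j = n
  · subst hj; rw [lp.single_apply_self]
  · rw [lp.single_apply_ne _ _ _ hj]; simpa using norm_nonneg a

lemma lp_single_norm (n : ℕ) (a : X n) : ‖(lp.single ⊤ n a : lp X ⊤)‖ = ‖a‖ := by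
  refine le_antisymm (lp_single_norm_le n a) ?_
  have := lp.norm_apply_le_norm (E := X) ENNReal.top_ne_zero (lp.single ⊤ n a) n
  rwa [lp.single_apply_self] at this

/-- The coordinate inclusion as a continuous linear map. -/
noncomputable def lpSingleCLM (𝕜 : Type*) [RCLike 𝕜] (X : ℕ → Type*)
    [∀ n, NormedAddCommGroup (X n)] [∀ n, NormedSpace 𝕜 (X n)] (n : ℕ) :
    X n →L[𝕜] lp X ⊤ :=
  LinearMap.mkContinuous
    { toFun := fun a => lp.single ⊤ n a
      map_add' := fun a b => by
        apply lp.ext; funext j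
        rw [lp.coeFn_add]
        by_cases hj : j = n
        · subst hj; simp [lp.single_apply_self]
        · simp [lp.single_apply_ne _ _ _ hj]
      map_smul' := fun c a => by
        simp [lp.single_smul] }
    1 (fun a => by simpa using (lp_single_norm n a).le)

@[simp] lemma lpSingleCLM_apply (n : ℕ) (a : X n) :
    lpSingleCLM 𝕜 X n a = lp.single ⊤ n a := rfl

/-- Key estimate: if `a` vanishes at coordinate `n` then
`re f(single u) + ‖f a‖ ≤ 1`. -/
lemma key_est (n : ℕ) (f : lp X ⊤ →L[𝕜] 𝕜) (hf : ‖f‖ ≤ 1) (u : X n) (hu : ‖u‖ ≤ 1)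
    (a : lp X ⊤) (ha : ∀ j, ‖a j‖ ≤ 1) (han : a n = 0) :
    RCLike.re (f (lp.single ⊤ n u)) + ‖f a‖ ≤ 1 := by
  by_cases hfa : f a = 0
  · rw [hfa, norm_zero, add_zero]
    calc RCLike.re (f (lp.single ⊤ n u)) ≤ ‖f (lp.single ⊤ n u)‖ := RCLike.re_le_norm _
      _ ≤ ‖f‖ * ‖(lp.single ⊤ n u : lp X ⊤)‖ := f.le_opNorm _
      _ ≤ 1 * 1 := by
          exact mul_le_mul hf ((lp_single_norm n u).le.trans hu) (norm_nonneg _) zero_le_one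
      _ = 1 := one_mul 1
  · set c : 𝕜 := (‖f a‖ : 𝕜) / f a with hc
    have hcn : ‖c‖ = 1 := by
      rw [hc, norm_div, RCLike.norm_ofReal, abs_norm, div_self (norm_ne_zero_iff.2 hfa)]
    have hcf : c * f a = (‖f a‖ : 𝕜) := div_mul_cancel₀ _ hfa
    have hb : ‖lp.single ⊤ n u + c • a‖ ≤ 1 := by
      refine lp.norm_le_of_forall_le zero_le_one fun j => ?_
      have hj' : (lp.single ⊤ n u + c • a) j = lp.single ⊤ n u j + c • a j := by
        rw [lp.coeFn_add, Pi.add_apply, lp.coeFn_smul, Pi.smul_apply]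
      by_cases hj : j = n
      · subst hj
        rw [hj', lp.single_apply_self, han, smul_zero, add_zero]; exact hu
      · rw [hj', lp.single_apply_ne _ _ _ hj, zero_add, norm_smul, hcn, one_mul]
        exact ha j
    have h1 : RCLike.re (f (lp.single ⊤ n u + c • a)) ≤ 1 := by
      calc RCLike.re (f (lp.single ⊤ n u + c • a)) ≤ ‖f (lp.single ⊤ n u + c • a)‖ :=
            RCLike.re_le_norm _
        _ ≤ ‖f‖ * ‖lp.single ⊤ n u + c • a‖ := f.le_opNorm _
        _ ≤ 1 * 1 := mul_le_mul hf hb (norm_nonneg _) zero_le_one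
        _ = 1 := one_mul 1
    rw [map_add, map_smul, smul_eq_mul, hcf, map_add] at h1
    simpa using h1

end Aux

set_option maxHeartbeats 1600000 in
/-- If the ℓ^∞-sum of a sequence of nonzero Banach spaces is lush, then each summand is lush. -/
theorem isLush_of_isLush_lpInfty {𝕜 : Type*} [RCLike 𝕜] {X : ℕ → Type*}
    [∀ n, NormedAddCommGroup (X n)] [∀ n, NormedSpace 𝕜 (X n)]
    [∀ n, CompleteSpace (X n)] [∀ n, Nontrivial (X n)]
    (h : IsLush 𝕜 (lp X ⊤)) : ∀ n, IsLush 𝕜 (X n) := by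
  intro n u v hu hv ε hε
  set δ : ℝ := min (ε / 2) (1 / 2) with hδdef
  have hδ0 : 0 < δ := lt_min (by linarith) (by norm_num)
  have hδε2 : δ ≤ ε / 2 := min_le_left _ _
  have hδhalf : δ ≤ 1 / 2 := min_le_right _ _
  have huhatn : ‖(lp.single ⊤ n u : lp X ⊤)‖ = 1 := by rw [lp_single_norm, hu]
  have hvhatn : ‖(lp.single ⊤ n v : lp X ⊤)‖ = 1 := by rw [lp_single_norm, hv]
  obtain ⟨f, hf1, ⟨huhatb, huhatre⟩, hdist⟩ :=
    h (lp.single ⊤ n u) (lp.single ⊤ n v) huhatn hvhatn δ hδ0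
  -- define g
  set g : X n →L[𝕜] 𝕜 := f.comp (lpSingleCLM 𝕜 X n) with hg
  have hgapp : ∀ x : X n, g x = f (lp.single ⊤ n x) := fun x => rfl
  have hgle : ‖g‖ ≤ 1 := by
    refine g.opNorm_le_bound zero_le_one fun x => ?_
    rw [hgapp, one_mul]
    calc ‖f (lp.single ⊤ n x)‖ ≤ ‖f‖ * ‖(lp.single ⊤ n x : lp X ⊤)‖ := f.le_opNorm _
      _ = ‖x‖ := by rw [hf1, one_mul, lp_single_norm]
  have hgu : 1 - δ < RCLike.re (g u) := by rw [hgapp]; exact huhatre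
  have hgnorm : 1 - δ ≤ ‖g‖ := by
    have := (RCLike.re_le_norm (g u)).trans ((g.le_opNorm u).trans (by rw [hu, mul_one]))
    linarith
  have hgpos : 0 < ‖g‖ := by linarith
  -- normalized functional
  set g' : X n →L[𝕜] 𝕜 := ((‖g‖⁻¹ : ℝ) : 𝕜) • g with hg'
  have hg'1 : ‖g'‖ = 1 := by
    have h1 : ‖g'‖ = ‖((‖g‖⁻¹ : ℝ) : 𝕜)‖ * ‖g‖ :=
      norm_smul (α := 𝕜) (β := X n →L[𝕜] 𝕜) ((‖g‖⁻¹ : ℝ) : 𝕜) g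
    rw [h1, RCLike.norm_ofReal, abs_of_pos (inv_pos.2 hgpos),
      inv_mul_cancel₀ (ne_of_gt hgpos)]
  have hg'mono : ∀ x : X n, 0 ≤ RCLike.re (g x) → RCLike.re (g x) ≤ RCLike.re (g' x) := by
    intro x hx
    have h2 : g' x = ((‖g‖⁻¹ : ℝ) : 𝕜) * g x := rfl
    rw [h2, RCLike.re_ofReal_mul]
    nlinarith [mul_le_mul_of_nonneg_right ((one_le_inv₀ hgpos).2 hgle) hx]
  refine ⟨g', hg'1, ⟨hu.le, ?_⟩, ?_⟩
  · have h0 : (0 : ℝ) ≤ RCLike.re (g u) := by linarith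
    have := hg'mono u h0
    linarith
  -- distance estimate
  · have hne : (ConvRotSlice 𝕜 f δ).Nonempty := by
      refine ⟨lp.single ⊤ n u, 1, fun _ => 1, fun _ => 1, fun _ => lp.single ⊤ n u,
        fun _ => zero_le_one, by simp, fun _ => by simp, fun _ => ⟨huhatb, huhatre⟩, by simp⟩
    obtain ⟨w, hw, hwd⟩ := (Metric.infDist_lt_iff hne).1 hdist
    obtain ⟨m, t, ω, s, ht0, ht1, hω, hs, rfl⟩ := hw
    -- each projected point is in the slice of g'
    have hproj : ∀ k : Fin m, (s k) n ∈ Slice 𝕜 g' ε := by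
      intro k
      have hsk1 : ‖s k‖ ≤ 1 := (hs k).1
      have hskn : ‖(s k) n‖ ≤ 1 :=
        (lp.norm_apply_le_norm ENNReal.top_ne_zero (s k) n).trans hsk1
      -- the remainder
      set r : lp X ⊤ := s k - lp.single ⊤ n ((s k) n) with hr
      have hrn : r n = 0 := by
        rw [hr, lp.coeFn_sub, Pi.sub_apply, lp.single_apply_self, sub_self]
      have hrc : ∀ j, ‖r j‖ ≤ 1 := by
        intro j
        by_cases hj : j = n
        · subst hj; rw [hrn]; simp
        · rw [hr, lp.coeFn_sub, Pi.sub_apply, lp.single_apply_ne _ _ _ hj, sub_zero]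
          exact (lp.norm_apply_le_norm ENNReal.top_ne_zero (s k) j).trans hsk1
      have hkey := key_est n f hf1.le u hu.le r hrc hrn
      have hfr : ‖f r‖ < δ := by
        have : 1 - δ < RCLike.re (f (lp.single ⊤ n u)) := huhatre
        linarith
      have hsplit : f (s k) = f (lp.single ⊤ n ((s k) n)) + f r := by
        rw [← map_add]; congr 1
        apply lp.ext; funext j
        rw [lp.coeFn_add, Pi.add_apply, hr, lp.coeFn_sub, Pi.sub_apply]
        abel
      have hfsk : 1 - δ < RCLike.re (f (s k)) := (hs k).2
      have hre : 1 - 2 * δ < RCLike.re (g ((s k) n)) := by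
        rw [hgapp]
        have h1 : RCLike.re (f (s k)) =
            RCLike.re (f (lp.single ⊤ n ((s k) n))) + RCLike.re (f r) := by
          rw [hsplit, map_add]
        have h2 : RCLike.re (f r) ≤ ‖f r‖ := RCLike.re_le_norm _
        linarith
      have h0 : (0 : ℝ) ≤ RCLike.re (g ((s k) n)) := by linarith
      refine ⟨hskn, ?_⟩
      have := hg'mono _ h0
      linarith
    -- the candidate point
    refine lt_of_le_of_lt (Metric.infDist_le_dist_of_mem
      (⟨m, t, ω, fun k => (s k) n, ht0, ht1, hω, hproj, rfl⟩ :
        (∑ k, ((t k : 𝕜) * ω k) • (s k) n) ∈ ConvRotSlice 𝕜 g' ε)) ?_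
    have hcoord : (∑ k, ((t k : 𝕜) * ω k) • (s k) n) =
        ((∑ k, ((t k : 𝕜) * ω k) • s k : lp X ⊤) : ∀ j, X j) n := by
      rw [lp.coeFn_sum, Finset.sum_apply]
      refine Finset.sum_congr rfl fun k _ => ?_
      rw [lp.coeFn_smul, Pi.smul_apply]
    rw [dist_eq_norm, hcoord]
    have : v - (((∑ k, ((t k : 𝕜) * ω k) • s k : lp X ⊤) : ∀ j, X j) n) =
        ((lp.single ⊤ n v - ∑ k, ((t k : 𝕜) * ω k) • s k : lp X ⊤) : ∀ j, X j) n := by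
      rw [lp.coeFn_sub, Pi.sub_apply, lp.single_apply_self]
    rw [this]
    calc ‖((lp.single ⊤ n v - ∑ k, ((t k : 𝕜) * ω k) • s k : lp X ⊤) : ∀ j, X j) n‖
        ≤ ‖(lp.single ⊤ n v - ∑ k, ((t k : 𝕜) * ω k) • s k : lp X ⊤)‖ :=
          lp.norm_apply_le_norm ENNReal.top_ne_zero _ n
      _ = dist (lp.single ⊤ n v) (∑ k, ((t k : 𝕜) * ω k) • s k) := (dist_eq_norm _ _).symm
      _ < δ := hwd
      _ ≤ ε := by linarith
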